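/- Let G = ℤ/2 * ℤ/2 * ℤ/2 be the free product of three copies of the cyclic group of order 2, with t₁, t₂, t₃ the generators of the three factors, and let ε : G → ℤ/2 be the homomorphism sending each tᵢ to the nontrivial element. Then the kernel of ε is a free group of rank 2, freely generated by the elements t₂t₁ and t₁t₃. -/

import Mathlib

open Multiplicative

def z2aux {M : Type*} [Group M] (x : M) (h : x * x = 1) :
    { f : ℤ →+ Additive M // f 2 = 0 } :=
  ⟨zmultiplesHom (Additive M) (Additive.ofMul x), by
    have : ((2:ℤ) • Additive.ofMul x) = Additive.ofMul (x * x) := by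
      rw [two_zsmul, ← ofMul_mul]
    simp [zmultiplesHom, this, h]⟩

/-- Monoid hom out of `Multiplicative (ZMod 2)` from a square-one element. -/
def z2hom {M : Type*} [Group M] (x : M) (h : x * x = 1) :
    Multiplicative (ZMod 2) →* M :=
  AddMonoidHom.toMultiplicativeLeft (ZMod.lift 2 (z2aux x h))

@[simp] lemma z2hom_apply {M : Type*} [Group M] (x : M) (h : x * x = 1) :
    z2hom x h (ofAdd 1) = x := by
  have h1 : (ofAdd (1 : ZMod 2)) = ofAdd ((1 : ℤ) : ZMod 2) := by decide
  rw [h1]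
  show Additive.toMul (ZMod.lift 2 (z2aux x h) (((1:ℤ) : ZMod 2))) = x
  rw [ZMod.lift_coe]
  simp [z2aux, zmultiplesHom]

lemma z2hom_ext {M : Type*} [Monoid M] {f g : Multiplicative (ZMod 2) →* M}
    (h : f (ofAdd 1) = g (ofAdd 1)) : f = g := by
  refine MonoidHom.ext fun x => ?_
  have hx : x = 1 ∨ x = ofAdd 1 := by revert x; decide
  rcases hx with rfl | rfl <;> simp [h]

abbrev F2 := FreeGroup (Fin 2)

/-- The inversion endomorphism of the free group on two generators. -/
def invHom : F2 →* F2 := FreeGroup.lift fun i => (FreeGroup.of i)⁻¹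

@[simp] lemma invHom_of (i : Fin 2) : invHom (FreeGroup.of i) = (FreeGroup.of i)⁻¹ := by
  simp [invHom]

lemma invHom_invHom (w : F2) : invHom (invHom w) = w := by
  have : invHom.comp invHom = MonoidHom.id F2 := by
    ext i
    simp
  exact DFunLike.congr_fun this w

/-- The inversion automorphism. -/
def sigmaAut : MulAut F2 :=
  { toFun := invHom, invFun := invHom, left_inv := invHom_invHom,
    right_inv := invHom_invHom, map_mul' := map_mul invHom }

lemma sigmaAut_sq : sigmaAut * sigmaAut = 1 := by
  ext w
  exact invHom_invHom w

/-- Action of ℤ/2 on F2 by inversion of generators. -/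
def phiAct : Multiplicative (ZMod 2) →* MulAut F2 := z2hom sigmaAut sigmaAut_sq

abbrev Hsd := SemidirectProduct F2 (Multiplicative (ZMod 2)) phiAct

open SemidirectProduct

def sElt : Hsd := inr (ofAdd 1)

def xElt : Fin 3 → F2 := ![1, FreeGroup.of 0, (FreeGroup.of 1)⁻¹]

@[simp] lemma phiAct_one_apply (w : F2) : phiAct (ofAdd 1) w = invHom w := by
  simp [phiAct]
  rfl

lemma ofAdd_one_inv : (ofAdd (1 : ZMod 2))⁻¹ = ofAdd 1 := by decide

lemma sElt_mul_inl (w : F2) : sElt * inl w = inl (invHom w) * sElt := by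
  have := inl_aut (φ := phiAct) (ofAdd (1 : ZMod 2)) w
  rw [phiAct_one_apply, ofAdd_one_inv] at this
  rw [this, sElt, mul_assoc, ← map_mul]
  have h2 : (ofAdd (1 : ZMod 2)) * ofAdd 1 = 1 := by decide
  rw [h2]
  simp

@[simp] lemma sElt_sq : sElt * sElt = 1 := by
  rw [sElt, ← map_mul]
  have : (ofAdd (1 : ZMod 2)) * ofAdd 1 = 1 := by decide
  rw [this, map_one]

def yElt (i : Fin 3) : Hsd := inl (xElt i) * sElt

lemma yElt_sq (i : Fin 3) : yElt i * yElt i = 1 := by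
  have key : invHom (xElt i) = (xElt i)⁻¹ := by
    fin_cases i <;> simp [xElt]
  rw [yElt, mul_assoc, ← mul_assoc sElt, sElt_mul_inl, key, mul_assoc, sElt_sq,
    mul_one, ← map_mul, mul_inv_cancel, map_one]


/-- The free product `ℤ/2 * ℤ/2 * ℤ/2` of three copies of the cyclic group of order two. -/
abbrev FP3Z2 := Monoid.CoprodI (fun _ : Fin 3 => Multiplicative (ZMod 2))

/-- The generator `tᵢ` of the `i`-th factor of `ℤ/2 * ℤ/2 * ℤ/2`. -/
def tGen (i : Fin 3) : FP3Z2 :=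
  Monoid.CoprodI.of (i := i) (Multiplicative.ofAdd (1 : ZMod 2))

/-- The homomorphism `ε : ℤ/2 * ℤ/2 * ℤ/2 → ℤ/2` sending each `tᵢ` to the nontrivial
element. -/
def epsilonFP : FP3Z2 →* Multiplicative (ZMod 2) :=
  Monoid.CoprodI.lift fun _ => MonoidHom.id (Multiplicative (ZMod 2))

/-- The two elements `t₂t₁` and `t₁t₃` (here zero-indexed: `t 1 * t 0` and `t 0 * t 2`). -/
def kerBasisFP : Fin 2 → FP3Z2 :=
  ![tGen 1 * tGen 0, tGen 0 * tGen 2]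

lemma tGen_sq (i : Fin 3) : tGen i * tGen i = 1 := by
  rw [tGen, ← map_mul]
  have : (ofAdd (1 : ZMod 2)) * ofAdd 1 = 1 := by decide
  rw [this, map_one]

lemma tGen_inv (i : Fin 3) : (tGen i)⁻¹ = tGen i :=
  inv_eq_of_mul_eq_one_right (tGen_sq i)

@[simp] lemma tGen_cancel (a : FP3Z2) (i : Fin 3) : a * tGen i * tGen i = a := by
  rw [mul_assoc, tGen_sq, mul_one]

/-- The embedding `FP3Z2 → F2 ⋊ ℤ/2`. -/
def psiHom : FP3Z2 →* Hsd := Monoid.CoprodI.lift fun i => z2hom (yElt i) (yElt_sq i)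

@[simp] lemma psiHom_tGen (i : Fin 3) : psiHom (tGen i) = yElt i := by
  rw [psiHom, tGen, Monoid.CoprodI.lift_of, z2hom_apply]

/-- The lift `F2 → FP3Z2`. -/
abbrev fHom : FreeGroup (Fin 2) →* FP3Z2 := FreeGroup.lift kerBasisFP

lemma psi_comp_f : psiHom.comp fHom = (inl : F2 →* Hsd) := by
  apply FreeGroup.ext_hom
  intro i
  fin_cases i <;>
    simp only [MonoidHom.comp_apply, FreeGroup.lift_apply_of, kerBasisFP, Fin.zero_eta, Fin.mk_one,
      Matrix.cons_val_zero, Matrix.cons_val_one, Matrix.head_cons, map_mul, psiHom_tGen,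
      yElt, xElt]
  · -- t1 * t0 ↦ inl (of 0)
    rw [map_one, one_mul, mul_assoc, sElt_sq, mul_one]
  · -- t0 * t2 ↦ inl (of 1)
    rw [show ((![1, FreeGroup.of 0, (FreeGroup.of 1)⁻¹] : Fin 3 → F2) 2) = (FreeGroup.of 1)⁻¹ from rfl,
      map_one, one_mul, ← mul_assoc, sElt_mul_inl, mul_assoc, sElt_sq, mul_one]
    simp


lemma compat : ∀ g : Multiplicative (ZMod 2),
    fHom.comp (phiAct g).toMonoidHom =
      (MulAut.conj (z2hom (tGen 0) (tGen_sq 0) g)).toMonoidHom.comp fHom := by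
  intro g
  have hg : g = 1 ∨ g = ofAdd 1 := by revert g; decide
  rcases hg with rfl | rfl
  · simp [MulAut.conj]
    rfl
  · apply FreeGroup.ext_hom
    intro i
    simp only [MonoidHom.comp_apply, MulEquiv.coe_toMonoidHom, phiAct_one_apply, invHom_of,
      z2hom_apply, MulAut.conj_apply, FreeGroup.lift_apply_of, map_inv]
    fin_cases i <;>
      simp only [kerBasisFP, Fin.zero_eta, Fin.mk_one, Matrix.cons_val_zero, Matrix.cons_val_one,
        Matrix.head_cons, FreeGroup.lift_apply_of, mul_inv_rev, tGen_inv] <;>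
      simp [← mul_assoc, tGen_sq]

/-- The retraction `F2 ⋊ ℤ/2 → FP3Z2`. -/
def chiHom : Hsd →* FP3Z2 :=
  SemidirectProduct.lift fHom (z2hom (tGen 0) (tGen_sq 0)) compat

lemma chi_psi : chiHom.comp psiHom = MonoidHom.id FP3Z2 := by
  apply Monoid.CoprodI.ext_hom
  intro i
  apply z2hom_ext
  simp only [MonoidHom.comp_apply, MonoidHom.id_apply]
  show chiHom (psiHom (tGen i)) = tGen i
  rw [psiHom_tGen, yElt, map_mul]
  rw [show chiHom sElt = tGen 0 by rw [sElt, chiHom, SemidirectProduct.lift_inr, z2hom_apply]]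
  rw [show chiHom (inl (xElt i)) = fHom (xElt i) by rw [chiHom, SemidirectProduct.lift_inl]]
  fin_cases i
  · show fHom (xElt 0) * tGen 0 = tGen 0
    simp [xElt]
  · show fHom (xElt 1) * tGen 0 = tGen 1
    have : fHom (xElt 1) = tGen 1 * tGen 0 := by simp [xElt, kerBasisFP]
    rw [this, tGen_cancel]
  · show fHom (xElt 2) * tGen 0 = tGen 2
    have : fHom (xElt 2) = tGen 2 * tGen 0 := by
      simp only [xElt, Matrix.cons_val_two, Matrix.tail_cons, Matrix.head_cons, map_inv,
        FreeGroup.lift_apply_of, kerBasisFP, Matrix.cons_val_one, Matrix.cons_val_zero]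
      rw [mul_inv_rev, tGen_inv, tGen_inv]
    rw [this, tGen_cancel]

lemma psi_injective : Function.Injective psiHom :=
  Function.LeftInverse.injective (g := chiHom) (fun x => DFunLike.congr_fun chi_psi x)

lemma rightHom_psi : (rightHom : Hsd →* Multiplicative (ZMod 2)).comp psiHom = epsilonFP := by
  apply Monoid.CoprodI.ext_hom
  intro i
  apply z2hom_ext
  simp only [MonoidHom.comp_apply]
  show rightHom (psiHom (tGen i)) = epsilonFP (tGen i)
  rw [psiHom_tGen, yElt, map_mul, rightHom_inl, one_mul, sElt, rightHom_inr]
  rw [epsilonFP, tGen, Monoid.CoprodI.lift_of, MonoidHom.id_apply]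

lemma eps_comp_f : epsilonFP.comp fHom = 1 := by
  apply FreeGroup.ext_hom
  intro i
  fin_cases i <;>
    simp only [MonoidHom.comp_apply, FreeGroup.lift_apply_of, kerBasisFP, Fin.zero_eta, Fin.mk_one,
      Matrix.cons_val_zero, Matrix.cons_val_one, Matrix.head_cons, map_mul, MonoidHom.one_apply,
      epsilonFP, tGen, Monoid.CoprodI.lift_of, MonoidHom.id_apply] <;> decide

/-- The kernel of `ε : ℤ/2 * ℤ/2 * ℤ/2 → ℤ/2` is a free group of rank
`2`, freely generated by `t₂t₁` and `t₁t₃`: the induced homomorphism from the free group of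
rank `2` is injective with range exactly `ker ε`. -/
theorem ker_epsilon_free_of_rank_two :
    Function.Injective ⇑(FreeGroup.lift kerBasisFP) ∧
      (FreeGroup.lift kerBasisFP : FreeGroup (Fin 2) →* FP3Z2).range = epsilonFP.ker := by
  constructor
  · intro a b hab
    have : psiHom (fHom a) = psiHom (fHom b) := by rw [show fHom a = fHom b from hab]
    have h2 : (inl : F2 →* Hsd) a = inl b := by
      rw [← DFunLike.congr_fun psi_comp_f a, ← DFunLike.congr_fun psi_comp_f b]
      exact this
    exact inl_injective h2
  · ext g
    constructor
    · rintro ⟨w, rfl⟩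
      show epsilonFP (fHom w) = 1
      rw [← MonoidHom.comp_apply, eps_comp_f, MonoidHom.one_apply]
    · intro hg
      have hε : epsilonFP g = 1 := hg
      have hr : rightHom (psiHom g) = 1 := by
        rw [← MonoidHom.comp_apply, rightHom_psi, hε]
      have hdec : psiHom g = inl ((psiHom g).left) := by
        conv_lhs => rw [← inl_left_mul_inr_right (psiHom g)]
        rw [show (psiHom g).right = rightHom (psiHom g) from rfl, hr, map_one, mul_one]
      refine ⟨(psiHom g).left, ?_⟩
      apply psi_injective
      rw [← MonoidHom.comp_apply, psi_comp_f]
      exact hdec.symm
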